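/- arXiv:1710.10875 — 2 statements merged into one kernel-verified Lean document; each statement's English description precedes it below -/
import Mathlib

section
/- For N = 0 and for every fixed integer N ≥ 2, the set {n ∈ ℕ : B(n) − β(n) = N} has positive natural density; that is, the limit as x → ∞ of (1/x)·#{n ≤ x : B(n) − β(n) = N} exists and is strictly positive. -/
open Filter

/-- `B n` is the sum of the prime divisors of `n` counted with multiplicity
(so `B 1 = 0`). -/
def B (n : ℕ) : ℕ := (Nat.primeFactorsList n).sum

/-- `beta n` is the sum of the distinct prime divisors of `n` (so `beta 1 = 0`). -/
def beta (n : ℕ) : ℕ := ∑ p ∈ n.primeFactors, p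

open Finset

lemma B_eq (n : ℕ) : B n = ∑ p ∈ n.primeFactors, n.factorization p * p := by
  unfold B
  rw [← Multiset.sum_coe]
  have := Finset.sum_multiset_map_count (n.primeFactorsList : Multiset ℕ) (id : ℕ → ℕ)
  rw [Multiset.map_id] at this
  rw [this]
  apply Finset.sum_congr
  · rfl
  · intro p hp
    rw [Multiset.coe_count, Nat.primeFactorsList_count_eq, smul_eq_mul, id]

lemma B_sub_beta (n : ℕ) : B n - beta n = ∑ p ∈ n.primeFactors, (n.factorization p - 1) * p := by
  rw [B_eq, beta, ← Finset.sum_tsub_distrib]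
  · apply Finset.sum_congr rfl
    intro p hp
    rw [Nat.sub_one_mul]
  · intro p hp
    rw [Nat.mem_primeFactors] at hp
    have h1 : 1 ≤ n.factorization p :=
      (hp.1.factorization_pos_of_dvd hp.2.2 hp.2.1)
    calc p = 1 * p := (one_mul p).symm
    _ ≤ n.factorization p * p := Nat.mul_le_mul_right _ h1

section Generic

variable {P : ℕ → Prop} [DecidablePred P]

lemma periodic_iterate {m : ℕ} (hP : ∀ n, 1 ≤ n → (P (n + m) ↔ P n)) :
    ∀ j r, 1 ≤ r → (P (r + j * m) ↔ P r) := by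
  intro j
  induction j with
  | zero => simp
  | succ j ih =>
    intro r hr
    have : r + (j + 1) * m = (r + j * m) + m := by ring
    rw [this, hP _ (by omega)]
    exact ih r hr

lemma periodic_block {m : ℕ} (hm : 0 < m) (hP : ∀ n, 1 ≤ n → (P (n + m) ↔ P n)) :
    ∀ j, ((Finset.Icc 1 (j * m)).filter P).card = j * ((Finset.Icc 1 m).filter P).card := by
  intro j
  induction j with
  | zero => simp
  | succ j ih =>
    have hsplit : Finset.Icc 1 ((j + 1) * m) = Finset.Icc 1 (j * m) ∪ Finset.Ioc (j * m) (j * m + m) := by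
      rw [(show ∀ b : ℕ, Finset.Icc 1 b = Finset.Ioc 0 b from fun b => Finset.Icc_add_one_left_eq_Ioc (a := 0) (b := b)), (show ∀ b : ℕ, Finset.Icc 1 b = Finset.Ioc 0 b from fun b => Finset.Icc_add_one_left_eq_Ioc (a := 0) (b := b)),
        Finset.Ioc_union_Ioc_eq_Ioc (Nat.zero_le _) (Nat.le_add_right _ _)]
      congr 1
      ring
    have hdisj : Disjoint (Finset.Icc 1 (j * m)) (Finset.Ioc (j * m) (j * m + m)) := by
      rw [Finset.disjoint_left]
      intro a ha hb
      simp only [Finset.mem_Icc] at ha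
      simp only [Finset.mem_Ioc] at hb
      omega
    rw [hsplit, Finset.filter_union, Finset.card_union_of_disjoint
      (Finset.disjoint_filter_filter hdisj)]
    have himg : Finset.Ioc (j * m) (j * m + m) = (Finset.Icc 1 m).image (· + j * m) := by
      rw [(show ∀ b : ℕ, Finset.Icc 1 b = Finset.Ioc 0 b from fun b => Finset.Icc_add_one_left_eq_Ioc (a := 0) (b := b)), Finset.image_add_right_Ioc]
      congr 1 <;> omega
    have hblock : ((Finset.Ioc (j * m) (j * m + m)).filter P).card
        = ((Finset.Icc 1 m).filter P).card := by
      rw [himg, Finset.filter_image]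
      rw [Finset.card_image_of_injective _ (add_left_injective _)]
      congr 1
      apply Finset.filter_congr
      intro r hr
      simp only [Finset.mem_Icc] at hr
      simp [periodic_iterate hP j r hr.1]
    rw [ih, hblock]
    ring

lemma periodic_card_bound {m : ℕ} (hm : 0 < m) (hP : ∀ n, 1 ≤ n → (P (n + m) ↔ P n))
    (x : ℕ) (hx : 1 ≤ x) :
    |(((Finset.Icc 1 x).filter P).card : ℝ) / x
      - (((Finset.Icc 1 m).filter P).card : ℝ) / m| ≤ m / x := by
  set c0 := ((Finset.Icc 1 m).filter P).card with hc0def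
  set j := x / m with hj
  have h1 : j * m ≤ x := Nat.div_mul_le_self x m
  have h2 : x < (j + 1) * m := by
    have hd : m * j + x % m = x := by rw [hj]; exact Nat.div_add_mod x m
    have hmlt : x % m < m := Nat.mod_lt x hm
    calc x = m * j + x % m := hd.symm
    _ < m * j + m := by omega
    _ = (j + 1) * m := by ring
  have hmono : ∀ y z : ℕ, y ≤ z →
      ((Finset.Icc 1 y).filter P).card ≤ ((Finset.Icc 1 z).filter P).card := by
    intro y z hyz
    exact Finset.card_le_card (Finset.filter_subset_filter _ (Finset.Icc_subset_Icc_right hyz))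
  have hlow : j * c0 ≤ ((Finset.Icc 1 x).filter P).card := by
    rw [← periodic_block hm hP j]
    exact hmono _ _ h1
  have hhigh : ((Finset.Icc 1 x).filter P).card ≤ (j + 1) * c0 := by
    rw [← periodic_block hm hP (j + 1)]
    exact hmono _ _ h2.le
  have hc0m : c0 ≤ m := by
    calc c0 ≤ (Finset.Icc 1 m).card := Finset.card_filter_le _ _
    _ = m := by rw [Nat.card_Icc]; omega
  have hx0 : (0:ℝ) < x := by exact_mod_cast hx
  have hm0 : (0:ℝ) < m := by exact_mod_cast hm
  have hlowR : (j : ℝ) * c0 ≤ (((Finset.Icc 1 x).filter P).card : ℝ) := by exact_mod_cast hlow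
  have hhighR : (((Finset.Icc 1 x).filter P).card : ℝ) ≤ ((j : ℝ) + 1) * c0 := by
    exact_mod_cast hhigh
  have h1R : (j : ℝ) * m ≤ x := by exact_mod_cast h1
  have h2R : (x : ℝ) ≤ (j : ℝ) * m + m := by
    have : (x : ℝ) < ((j : ℝ) + 1) * m := by exact_mod_cast h2
    nlinarith
  have hc0mR : (c0 : ℝ) ≤ m := by exact_mod_cast hc0m
  have hc00 : (0:ℝ) ≤ c0 := by positivity
  rw [abs_sub_le_iff]
  constructor
  · rw [div_sub_div _ _ hx0.ne' hm0.ne', div_le_div_iff₀ (by positivity) hx0]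
    have k1 : (((Finset.Icc 1 x).filter P).card : ℝ) * m ≤ (c0:ℝ) * x + (m:ℝ) * m := by
      nlinarith [mul_le_mul_of_nonneg_left h1R hc00,
        mul_le_mul_of_nonneg_right hhighR hm0.le,
        mul_le_mul_of_nonneg_right hc0mR hm0.le]
    nlinarith [mul_le_mul_of_nonneg_right k1 hx0.le]
  · rw [div_sub_div _ _ hm0.ne' hx0.ne', div_le_div_iff₀ (by positivity) hx0]
    have k2 : (c0:ℝ) * x ≤ (m:ℝ) * (((Finset.Icc 1 x).filter P).card : ℝ) + (m:ℝ) * m := by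
      nlinarith [mul_le_mul_of_nonneg_left h2R hc00,
        mul_le_mul_of_nonneg_right hlowR hm0.le,
        mul_le_mul_of_nonneg_right hc0mR hm0.le]
    nlinarith [mul_le_mul_of_nonneg_right k2 hx0.le]

lemma periodic_tendsto {m : ℕ} (hm : 0 < m) (hP : ∀ n, 1 ≤ n → (P (n + m) ↔ P n)) :
    Tendsto (fun x : ℕ => (((Finset.Icc 1 x).filter P).card : ℝ) / x) atTop
      (nhds ((((Finset.Icc 1 m).filter P).card : ℝ) / m)) := by
  rw [tendsto_iff_dist_tendsto_zero]
  apply squeeze_zero' (g := fun x : ℕ => (m : ℝ) / x)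
  · filter_upwards with x using dist_nonneg
  · filter_upwards [eventually_ge_atTop 1] with x hx
    rw [Real.dist_eq]
    exact periodic_card_bound hm hP x hx
  · exact tendsto_const_div_atTop_nhds_zero_nat (m : ℝ)

end Generic

section Counting

lemma sum_inv_sq_Ioc_le (a : ℕ) (ha : 1 ≤ a) (b : ℕ) :
    ∑ d ∈ Finset.Ioc a b, (1:ℝ)/(d:ℝ)^2 ≤ 1/a := by
  rcases le_or_gt b a with hba | hab
  · rw [Finset.Ioc_eq_empty (by omega)]
    simp
  · have key : ∀ c : ℕ, a ≤ c → ∑ d ∈ Finset.Ioc a c, (1:ℝ)/(d:ℝ)^2 ≤ 1/a - 1/c := by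
      intro c hc
      induction c, hc using Nat.le_induction with
      | base => simp
      | succ c hc ih =>
        rw [Finset.sum_Ioc_succ_top hc]
        have hc0 : (0:ℝ) < c := by
          have : (1:ℕ) ≤ c := le_trans ha hc
          exact_mod_cast Nat.lt_of_lt_of_le Nat.zero_lt_one this
        have hc1 : (0:ℝ) < (c:ℝ) + 1 := by linarith
        have hstep : (1:ℝ)/((c:ℝ)+1)^2 ≤ 1/c - 1/(c+1) := by
          rw [div_sub_div _ _ hc0.ne' hc1.ne']
          rw [div_le_div_iff₀ (by positivity) (by positivity)]
          ring_nf
          nlinarith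
        have := ih
        push_cast
        linarith
    have := key b hab.le
    have hb0 : (0:ℝ) < b := by
      have : (1:ℕ) ≤ b := by omega
      exact_mod_cast Nat.lt_of_lt_of_le Nat.zero_lt_one this
    have : (0:ℝ) ≤ 1/(b:ℝ) := by positivity
    linarith

lemma dvd_count_eq (d x : ℕ) :
    ((Finset.Icc 1 x).filter (fun n => d ∣ n)).card = x / d := by
  have : Finset.Icc 1 x = Finset.Ioc 0 x := by
    exact Finset.Icc_add_one_left_eq_Ioc (a := 0) (b := x)
  rw [this]
  exact Nat.Ioc_filter_dvd_card_eq_div x d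

lemma card_mod_class_le (L x : ℕ) (hL : 0 < L) (S : Finset ℕ) (hS : ∀ n ∈ S, n ∈ Finset.Icc 1 x)
    (h : ∀ a ∈ S, ∀ b ∈ S, a ≤ b → L ∣ b - a) : S.card ≤ x / L + 1 := by
  classical
  have key : ∀ u ∈ S, ∀ v ∈ S, u < v → u / L < v / L := by
    intro u hu v hv huv
    have hd := h u hu v hv huv.le
    have hL' : L ≤ v - u := Nat.le_of_dvd (by omega) hd
    have huv' : u + L ≤ v := by omega
    calc u / L < u / L + 1 := Nat.lt_succ_self _
    _ = (u + L) / L := (Nat.add_div_right u hL).symm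
    _ ≤ v / L := Nat.div_le_div_right huv'
  have : S.card ≤ (Finset.range (x / L + 1)).card := by
    apply Finset.card_le_card_of_injOn (fun n => n / L)
    · intro a ha
      simp only [Finset.mem_range]
      have hax : a ≤ x := (Finset.mem_Icc.mp (hS a ha)).2
      have := Nat.div_le_div_right (c := L) hax
      simp only [Finset.coe_range, Set.mem_Iio]
      omega
    · intro a ha b hb hab
      by_contra hne
      rcases Nat.lt_or_ge a b with hlt | hge
      · exact absurd hab (Nat.ne_of_lt (key a ha b hb hlt))
      · have hba : b < a := by omega
        exact absurd hab.symm (Nat.ne_of_lt (key b hb a ha hba))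
  simpa using this

lemma card_mod_class_ge (M w x : ℕ) (hM : 0 < M) (hw : 1 ≤ w) (hwM : w ≤ M) (hx : w ≤ x) :
    (x : ℝ)/M - 1 ≤ (((Finset.Icc 1 x).filter (fun n => n % M = w % M)).card : ℝ) := by
  set q := (x - w) / M with hq
  have hsub : (Finset.range (q + 1)).image (fun k => w + k * M) ⊆
      (Finset.Icc 1 x).filter (fun n => n % M = w % M) := by
    intro n hn
    simp only [Finset.mem_image, Finset.mem_range] at hn
    obtain ⟨k, hk, rfl⟩ := hn
    simp only [Finset.mem_filter, Finset.mem_Icc]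
    refine ⟨⟨by omega, ?_⟩, ?_⟩
    · have h1 : k * M ≤ q * M := Nat.mul_le_mul_right _ (by omega)
      have h2 : q * M ≤ x - w := by
        rw [hq]
        exact Nat.div_mul_le_self _ _
      omega
    · exact Nat.add_mul_mod_self_right w k M
  have hinj : Function.Injective (fun k => w + k * M) := by
    intro a b hab
    simp only at hab
    have : a * M = b * M := by omega
    exact Nat.eq_of_mul_eq_mul_right hM this
  have hcard : q + 1 ≤ ((Finset.Icc 1 x).filter (fun n => n % M = w % M)).card := by
    calc q + 1 = ((Finset.range (q + 1)).image (fun k => w + k * M)).card := by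
          rw [Finset.card_image_of_injective _ hinj, Finset.card_range]
    _ ≤ _ := Finset.card_le_card hsub
  have hxlt : x < (q + 2) * M := by
    have hd : M * q + (x - w) % M = x - w := by rw [hq]; exact Nat.div_add_mod _ _
    have hmlt : (x - w) % M < M := Nat.mod_lt _ hM
    have : (q + 2) * M = M * q + M + M := by ring
    omega
  have hxltR : (x : ℝ) < ((q:ℝ) + 2) * M := by exact_mod_cast hxlt
  have hM0 : (0:ℝ) < M := by exact_mod_cast hM
  have h1 : (x:ℝ)/M < (q:ℝ) + 2 := by
    rw [div_lt_iff₀ hM0]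
    linarith
  have h2 : ((q:ℝ) + 1) ≤ (((Finset.Icc 1 x).filter (fun n => n % M = w % M)).card : ℝ) := by
    exact_mod_cast hcard
  linarith

open scoped Classical in
lemma bad_count (Q x : ℕ) (hQ : 1 ≤ Q) :
    (((Finset.Icc 1 x).filter (fun n => ∃ p, Nat.Prime p ∧ Q < p ∧ p^2 ∣ n)).card : ℝ)
      ≤ (x : ℝ) / Q := by
  classical
  have hsub : (Finset.Icc 1 x).filter (fun n => ∃ p, Nat.Prime p ∧ Q < p ∧ p^2 ∣ n) ⊆
      (Finset.Ioc Q x).biUnion (fun d => (Finset.Icc 1 x).filter (fun n => d^2 ∣ n)) := by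
    intro n hn
    simp only [Finset.mem_filter] at hn
    obtain ⟨hnx, p, hp, hQp, hpn⟩ := hn
    have hn1 : 1 ≤ n := (Finset.mem_Icc.mp hnx).1
    have hnx' : n ≤ x := (Finset.mem_Icc.mp hnx).2
    have hp2n : p^2 ≤ n := Nat.le_of_dvd (by omega) hpn
    have hpp2 : p ≤ p^2 := Nat.le_self_pow (by norm_num) p
    apply Finset.mem_biUnion.mpr
    exact ⟨p, Finset.mem_Ioc.mpr ⟨hQp, by omega⟩, Finset.mem_filter.mpr ⟨hnx, hpn⟩⟩
  have hcard : (((Finset.Icc 1 x).filter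
      (fun n => ∃ p, Nat.Prime p ∧ Q < p ∧ p^2 ∣ n)).card : ℝ)
      ≤ ∑ d ∈ Finset.Ioc Q x, (((Finset.Icc 1 x).filter (fun n => d^2 ∣ n)).card : ℝ) := by
    have := le_trans (Finset.card_le_card hsub) (Finset.card_biUnion_le)
    exact_mod_cast this
  have hterm : ∀ d ∈ Finset.Ioc Q x,
      (((Finset.Icc 1 x).filter (fun n => d^2 ∣ n)).card : ℝ) ≤ (x:ℝ) * (1/(d:ℝ)^2) := by
    intro d hd
    have hd1 : 1 ≤ d := by
      have := (Finset.mem_Ioc.mp hd).1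
      omega
    rw [dvd_count_eq]
    have := Nat.cast_div_le (α := ℝ) (m := x) (n := d^2)
    push_cast at this ⊢
    calc ((x / d^2 : ℕ) : ℝ) ≤ (x:ℝ)/(d:ℝ)^2 := by push_cast at this; exact this
    _ = (x:ℝ) * (1/(d:ℝ)^2) := by ring
  calc (((Finset.Icc 1 x).filter (fun n => ∃ p, Nat.Prime p ∧ Q < p ∧ p^2 ∣ n)).card : ℝ)
      ≤ ∑ d ∈ Finset.Ioc Q x, (((Finset.Icc 1 x).filter (fun n => d^2 ∣ n)).card : ℝ) := hcard
  _ ≤ ∑ d ∈ Finset.Ioc Q x, (x:ℝ) * (1/(d:ℝ)^2) := Finset.sum_le_sum hterm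
  _ = (x:ℝ) * ∑ d ∈ Finset.Ioc Q x, (1:ℝ)/(d:ℝ)^2 := by rw [Finset.mul_sum]
  _ ≤ (x:ℝ) * (1/(Q:ℝ)) := by
      apply mul_le_mul_of_nonneg_left (sum_inv_sq_Ioc_le Q hQ x) (by positivity)
  _ = (x:ℝ)/Q := by ring

end Counting

section Main

def PP (Q : ℕ) : Finset ℕ := (Finset.range (Q+1)).filter Nat.Prime

def G (Q n : ℕ) : ℕ := ∑ p ∈ PP Q, (n.factorization p - 1) * p

def per (N Q : ℕ) : ℕ := ∏ p ∈ PP Q, p^(N+2)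

lemma mem_PP {Q p : ℕ} : p ∈ PP Q ↔ p ≤ Q ∧ p.Prime := by
  simp only [PP, Finset.mem_filter, Finset.mem_range]
  constructor
  · rintro ⟨h1, h2⟩; exact ⟨by omega, h2⟩
  · rintro ⟨h1, h2⟩; exact ⟨by omega, h2⟩

lemma per_pos (N Q : ℕ) : 0 < per N Q := by
  apply Finset.prod_pos
  intro p hp
  have := (mem_PP.mp hp).2.pos
  positivity

lemma pow_dvd_per {N Q p : ℕ} (hp : p ∈ PP Q) {e : ℕ} (he : e ≤ N + 2) :
    p ^ e ∣ per N Q :=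
  dvd_trans (pow_dvd_pow p he) (Finset.dvd_prod_of_mem _ hp)

lemma factorization_add_eq {p e n m : ℕ} (hp : p.Prime) (hn : n ≠ 0)
    (hpm : p^e ∣ m) (hlt : n.factorization p < e) :
    (n + m).factorization p = n.factorization p := by
  set v := n.factorization p with hv
  have hnm : n + m ≠ 0 := by omega
  have hdvd : p ^ v ∣ n := Nat.ordProj_dvd n p
  have hdm : p ^ v ∣ m := dvd_trans (pow_dvd_pow p (by omega)) hpm
  have h1 : p ^ v ∣ n + m := Dvd.dvd.add hdvd hdm
  have hnd : ¬ p ^ (v+1) ∣ n := Nat.pow_succ_factorization_not_dvd hn hp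
  have hdm1 : p ^ (v+1) ∣ m := dvd_trans (pow_dvd_pow p (by omega)) hpm
  have h2 : ¬ p ^ (v+1) ∣ n + m := by
    intro h
    apply hnd
    have := Nat.dvd_sub h hdm1
    simpa using this
  have hle : v ≤ (n+m).factorization p := (hp.pow_dvd_iff_le_factorization hnm).mp h1
  have hge : (n+m).factorization p ≤ v := by
    by_contra hgt
    exact h2 ((hp.pow_dvd_iff_le_factorization hnm).mpr (by omega))
  omega

lemma G_big {N Q p t : ℕ} (hp : p ∈ PP Q) (hpd : p^(N+2) ∣ t) (ht : t ≠ 0) :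
    N < G Q t := by
  obtain ⟨hpQ, hpp⟩ := mem_PP.mp hp
  have hv : N + 2 ≤ t.factorization p := (hpp.pow_dvd_iff_le_factorization ht).mp hpd
  have hterm : (N + 1) * 2 ≤ (t.factorization p - 1) * p :=
    Nat.mul_le_mul (by omega) hpp.two_le
  have hsingle : (t.factorization p - 1) * p ≤ G Q t :=
    Finset.single_le_sum (f := fun p => (t.factorization p - 1) * p)
      (fun i _ => Nat.zero_le _) hp
  omega

lemma G_periodic (N Q : ℕ) : ∀ n, 1 ≤ n → (G Q (n + per N Q) = N ↔ G Q n = N) := by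
  intro n hn
  by_cases hbig : ∃ p ∈ PP Q, p^(N+2) ∣ n
  · obtain ⟨p, hp, hpd⟩ := hbig
    have hpd' : p^(N+2) ∣ n + per N Q := Dvd.dvd.add hpd (pow_dvd_per hp le_rfl)
    have h1 := G_big hp hpd (by omega)
    have h2 := G_big hp hpd' (by omega)
    constructor <;> intro h <;> omega
  · push_neg at hbig
    have heq : G Q (n + per N Q) = G Q n := by
      apply Finset.sum_congr rfl
      intro p hp
      have hpp := (mem_PP.mp hp).2
      have hlt : n.factorization p < N + 2 := by
        by_contra hge
        exact hbig p hp ((hpp.pow_dvd_iff_le_factorization (by omega)).mpr (by omega))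
      rw [factorization_add_eq hpp (by omega) (pow_dvd_per hp le_rfl) hlt]
    rw [heq]

lemma full_eq_G {Q n : ℕ} (hn : n ≠ 0) (hQ : ∀ p, Nat.Prime p → Q < p → ¬ p^2 ∣ n) :
    B n - beta n = G Q n := by
  rw [B_sub_beta]
  classical
  have hsplit := Finset.sum_filter_add_sum_filter_not n.primeFactors (fun p => p ≤ Q)
    (fun p => (n.factorization p - 1) * p)
  have htail : ∑ p ∈ n.primeFactors.filter (fun p => ¬ p ≤ Q),
      (n.factorization p - 1) * p = 0 := by
    apply Finset.sum_eq_zero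
    intro p hp
    simp only [Finset.mem_filter, not_le] at hp
    obtain ⟨hpf, hQp⟩ := hp
    obtain ⟨hpp, hpdvd, -⟩ := Nat.mem_primeFactors.mp hpf
    have hv : n.factorization p ≤ 1 := by
      by_contra hge
      exact hQ p hpp hQp ((hpp.pow_dvd_iff_le_factorization hn).mpr (by omega))
    have : n.factorization p - 1 = 0 := by omega
    rw [this, zero_mul]
  have hhead : ∑ p ∈ n.primeFactors.filter (fun p => p ≤ Q),
      (n.factorization p - 1) * p = G Q n := by
    apply Finset.sum_subset
    · intro p hp
      simp only [Finset.mem_filter] at hp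
      obtain ⟨hpf, hQp⟩ := hp
      exact mem_PP.mpr ⟨hQp, (Nat.mem_primeFactors.mp hpf).1⟩
    · intro p hp hnp
      have hpp := (mem_PP.mp hp).2
      have hpQ := (mem_PP.mp hp).1
      have : p ∉ n.primeFactors := by
        intro hmem
        exact hnp (Finset.mem_filter.mpr ⟨hmem, hpQ⟩)
      have hv : n.factorization p = 0 := by
        by_contra h
        exact this (by rw [← Nat.support_factorization]; exact Finsupp.mem_support_iff.mpr h)
      rw [hv]
      simp
  rw [← hsplit, htail, Nat.add_zero]
  exact hhead

end Main

section Witness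

lemma Fd_two_three (a b : ℕ) (ha : a ≠ 0) (hb : b ≠ 0) :
    B (2^a * 3^b) - beta (2^a * 3^b) = (a-1)*2 + (b-1)*3 := by
  rw [B_sub_beta]
  have h2 : Nat.Prime 2 := Nat.prime_two
  have h3 : Nat.Prime 3 := Nat.prime_three
  have h2a : (2:ℕ)^a ≠ 0 := by positivity
  have h3b : (3:ℕ)^b ≠ 0 := by positivity
  have hpf : (2^a * 3^b).primeFactors = {2, 3} := by
    rw [Nat.primeFactors_mul h2a h3b, Nat.primeFactors_prime_pow ha h2,
      Nat.primeFactors_prime_pow hb h3]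
    rfl
  have hfac : (2^a * 3^b).factorization =
      Finsupp.single 2 a + Finsupp.single 3 b := by
    rw [Nat.factorization_mul h2a h3b, Nat.Prime.factorization_pow h2,
      Nat.Prime.factorization_pow h3]
  rw [hpf, hfac]
  rw [Finset.sum_insert (by norm_num), Finset.sum_singleton]
  simp [Finsupp.single_apply]

lemma exists_witness (N : ℕ) (hN : N = 0 ∨ 2 ≤ N) :
    ∃ w : ℕ, w ≠ 0 ∧ B w - beta w = N := by
  rcases hN with rfl | h2
  · exact ⟨1, one_ne_zero, by simp [B, beta]⟩
  · rcases Nat.even_or_odd N with ⟨t, ht⟩ | ⟨t, ht⟩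
    · refine ⟨2^(t+1) * 3^1, by positivity, ?_⟩
      rw [Fd_two_three _ _ (by omega) (by omega)]
      omega
    · refine ⟨2^t * 3^2, by positivity, ?_⟩
      have ht1 : 1 ≤ t := by omega
      rw [Fd_two_three _ _ (by omega) (by omega)]
      omega

lemma factorization_eq_of_mod {p e a b M : ℕ} (hp : p.Prime) (ha : a ≠ 0) (hb : b ≠ 0)
    (hmod : a % M = b % M) (hpM : p^e ∣ M) (hvb : b.factorization p < e) :
    a.factorization p = b.factorization p := by
  rcases le_total a b with hab | hba
  · have hdvd : M ∣ b - a := (Nat.modEq_iff_dvd' hab).mp hmod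
    have hpt : p^e ∣ b - a := dvd_trans hpM hdvd
    have hb' : b = a + (b - a) := by omega
    have hva : a.factorization p < e := by
      by_contra hge
      have hpa : p^e ∣ a := (hp.pow_dvd_iff_le_factorization ha).mpr (by omega)
      have : p^e ∣ b := hb' ▸ Dvd.dvd.add hpa hpt
      have := (hp.pow_dvd_iff_le_factorization hb).mp this
      omega
    rw [hb', factorization_add_eq hp ha hpt hva]
  · have hdvd : M ∣ a - b := (Nat.modEq_iff_dvd' hba).mp hmod.symm
    have hpt : p^e ∣ a - b := dvd_trans hpM hdvd
    have ha' : a = b + (a - b) := by omega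
    rw [ha', factorization_add_eq hp hb hpt hvb]

end Witness

section Assemble

open scoped Classical in
lemma symdiff_bound (N Q x : ℕ) (hQ : 1 ≤ Q) :
    |(((Finset.Icc 1 x).filter (fun n => B n - beta n = N)).card : ℝ)
      - (((Finset.Icc 1 x).filter (fun n => G Q n = N)).card : ℝ)| ≤ (x:ℝ)/Q := by
  set bad := (Finset.Icc 1 x).filter (fun n => ∃ p, Nat.Prime p ∧ Q < p ∧ p^2 ∣ n) with hbad
  have hswap : ∀ n ∈ Finset.Icc 1 x, n ∉ bad → (B n - beta n = N ↔ G Q n = N) := by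
    intro n hn hnb
    have hn0 : n ≠ 0 := by
      have := (Finset.mem_Icc.mp hn).1
      omega
    have hno : ∀ p, Nat.Prime p → Q < p → ¬ p^2 ∣ n := by
      intro p hpp hQp hp2
      exact hnb (Finset.mem_filter.mpr ⟨hn, ⟨p, hpp, hQp, hp2⟩⟩)
    rw [full_eq_G hn0 hno]
  have h1 : (Finset.Icc 1 x).filter (fun n => B n - beta n = N) ⊆
      (Finset.Icc 1 x).filter (fun n => G Q n = N) ∪ bad := by
    intro n hn
    obtain ⟨hnx, hnp⟩ := Finset.mem_filter.mp hn
    by_cases hb : n ∈ bad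
    · exact Finset.mem_union_right _ hb
    · exact Finset.mem_union_left _
        (Finset.mem_filter.mpr ⟨hnx, (hswap n hnx hb).mp hnp⟩)
  have h2 : (Finset.Icc 1 x).filter (fun n => G Q n = N) ⊆
      (Finset.Icc 1 x).filter (fun n => B n - beta n = N) ∪ bad := by
    intro n hn
    obtain ⟨hnx, hnp⟩ := Finset.mem_filter.mp hn
    by_cases hb : n ∈ bad
    · exact Finset.mem_union_right _ hb
    · exact Finset.mem_union_left _
        (Finset.mem_filter.mpr ⟨hnx, (hswap n hnx hb).mpr hnp⟩)
  have hc1 := le_trans (Finset.card_le_card h1) (Finset.card_union_le _ _)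
  have hc2 := le_trans (Finset.card_le_card h2) (Finset.card_union_le _ _)
  have hbadR := bad_count Q x hQ
  rw [abs_sub_le_iff]
  constructor
  · have : (((Finset.Icc 1 x).filter (fun n => B n - beta n = N)).card : ℝ)
        ≤ (((Finset.Icc 1 x).filter (fun n => G Q n = N)).card : ℝ) + bad.card := by
      exact_mod_cast hc1
    linarith
  · have : (((Finset.Icc 1 x).filter (fun n => G Q n = N)).card : ℝ)
        ≤ (((Finset.Icc 1 x).filter (fun n => B n - beta n = N)).card : ℝ) + bad.card := by
      exact_mod_cast hc2
    linarith

lemma G_of_class (N w Q : ℕ) (hw : w ≠ 0) (hFw : B w - beta w = N) (hQw : w ≤ Q)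
    (n : ℕ) (hn : n ≠ 0)
    (hmod : n % (w * ∏ p ∈ w.primeFactors, p) = w % (w * ∏ p ∈ w.primeFactors, p))
    (hsq : ∀ p ∈ PP Q, ¬ p ∣ w → ¬ p^2 ∣ n) : G Q n = N := by
  have hGw : G Q w = N := by
    rw [← full_eq_G hw ?_]
    · exact hFw
    · intro p hpp hQp hp2
      have hpw : p ∣ w := dvd_trans (dvd_pow_self p (by norm_num)) hp2
      have := Nat.le_of_dvd (by omega) hpw
      omega
  rw [← hGw]
  apply Finset.sum_congr rfl
  intro p hp
  obtain ⟨hpQ, hpp⟩ := mem_PP.mp hp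
  by_cases hpw : p ∣ w
  · have hmem : p ∈ w.primeFactors := Nat.mem_primeFactors.mpr ⟨hpp, hpw, hw⟩
    have hpM : p^(w.factorization p + 1) ∣ w * ∏ p ∈ w.primeFactors, p := by
      rw [pow_succ]
      exact mul_dvd_mul (Nat.ordProj_dvd w p) (Finset.dvd_prod_of_mem _ hmem)
    rw [factorization_eq_of_mod hpp hn hw hmod hpM (Nat.lt_succ_self _)]
  · have h1 : w.factorization p = 0 := Nat.factorization_eq_zero_of_not_dvd hpw
    have h2 : n.factorization p ≤ 1 := by
      by_contra hgt
      exact hsq p hp hpw ((hpp.pow_dvd_iff_le_factorization hn).mpr (by omega))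
    have h3 : n.factorization p - 1 = 0 := by omega
    simp [h1, h3]

end Assemble

lemma EQ_lower (N w : ℕ) (hw : w ≠ 0) (hFw : B w - beta w = N) (Q : ℕ) (hQw : w ≤ Q)
    (x : ℕ) (hx : w ≤ x) :
    (x:ℝ)/(4*((w * ∏ p ∈ w.primeFactors, p : ℕ) : ℝ)) - ((Q:ℝ) + 2)
      ≤ (((Finset.Icc 1 x).filter (fun n => G Q n = N)).card : ℝ) := by
  set M := w * ∏ p ∈ w.primeFactors, p with hMdef
  have hprodpos : 0 < ∏ p ∈ w.primeFactors, p :=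
    Finset.prod_pos (fun p hp => (Nat.prime_of_mem_primeFactors hp).pos)
  have hM0 : 0 < M := Nat.mul_pos (Nat.pos_of_ne_zero hw) hprodpos
  have hwM : w ≤ M := Nat.le_mul_of_pos_right w hprodpos
  set A := (Finset.Icc 1 x).filter (fun n => n % M = w % M) with hA
  set PQ' := (PP Q).filter (fun p => ¬ p ∣ w) with hPQ'
  set Good := (Finset.Icc 1 x).filter
    (fun n => n % M = w % M ∧ ∀ p ∈ PP Q, ¬ p ∣ w → ¬ p^2 ∣ n) with hGoodDef
  have hGood : Good ⊆ (Finset.Icc 1 x).filter (fun n => G Q n = N) := by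
    intro n hn
    obtain ⟨hnx, hmod, hsq⟩ := Finset.mem_filter.mp hn
    refine Finset.mem_filter.mpr ⟨hnx, G_of_class N w Q hw hFw hQw n ?_ hmod hsq⟩
    have := (Finset.mem_Icc.mp hnx).1
    omega
  have hcover : A ⊆ Good ∪ PQ'.biUnion
      (fun p => (Finset.Icc 1 x).filter (fun n => n % M = w % M ∧ p^2 ∣ n)) := by
    intro n hn
    obtain ⟨hnx, hmod⟩ := Finset.mem_filter.mp hn
    by_cases hg : ∀ p ∈ PP Q, ¬ p ∣ w → ¬ p^2 ∣ n
    · exact Finset.mem_union_left _ (Finset.mem_filter.mpr ⟨hnx, hmod, hg⟩)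
    · push_neg at hg
      obtain ⟨p, hp, hpw, hp2⟩ := hg
      exact Finset.mem_union_right _ (Finset.mem_biUnion.mpr
        ⟨p, Finset.mem_filter.mpr ⟨hp, hpw⟩, Finset.mem_filter.mpr ⟨hnx, hmod, hp2⟩⟩)
  have hAcard : (x:ℝ)/M - 1 ≤ (A.card : ℝ) :=
    card_mod_class_ge M w x hM0 (by omega) hwM hx
  have hApcard : ∀ p ∈ PQ',
      (((Finset.Icc 1 x).filter (fun n => n % M = w % M ∧ p^2 ∣ n)).card : ℝ)
        ≤ (x:ℝ)/M * (1/(p:ℝ)^2) + 1 := by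
    intro p hp
    obtain ⟨hpPP, hpw⟩ := Finset.mem_filter.mp hp
    obtain ⟨hpQ, hpp⟩ := mem_PP.mp hpPP
    have hcop : Nat.Coprime M (p^2) := by
      apply Nat.Coprime.symm
      apply Nat.Coprime.pow_left
      rw [hpp.coprime_iff_not_dvd]
      intro hpM
      rcases (Nat.Prime.dvd_mul hpp).mp hpM with h | h
      · exact hpw h
      · obtain ⟨q, hq, hpq⟩ := Prime.exists_mem_finset_dvd hpp.prime h
        have hqp : q.Prime := Nat.prime_of_mem_primeFactors hq
        have hpq' : p = q := (Nat.prime_dvd_prime_iff_eq hpp hqp).mp hpq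
        exact hpw (hpq' ▸ Nat.dvd_of_mem_primeFactors hq)
    have hL0 : 0 < M * p^2 := by
      have := hpp.pos
      positivity
    have hcount : ((Finset.Icc 1 x).filter
        (fun n => n % M = w % M ∧ p^2 ∣ n)).card ≤ x / (M * p^2) + 1 := by
      apply card_mod_class_le (M * p^2) x hL0 _ (fun n hn => (Finset.mem_filter.mp hn).1)
      intro a ha b hb hab
      obtain ⟨hax, hamod, hap⟩ := Finset.mem_filter.mp ha
      obtain ⟨hbx, hbmod, hbp⟩ := Finset.mem_filter.mp hb
      have hMd : M ∣ b - a := (Nat.modEq_iff_dvd' hab).mp (hamod.trans hbmod.symm)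
      have hpd : p^2 ∣ b - a := Nat.dvd_sub hbp hap
      exact Nat.Coprime.mul_dvd_of_dvd_of_dvd hcop hMd hpd
    have hcastR : ((x / (M * p^2) : ℕ) : ℝ) ≤ (x:ℝ)/((M:ℝ) * (p:ℝ)^2) := by
      have := Nat.cast_div_le (α := ℝ) (m := x) (n := M * p^2)
      push_cast at this
      exact this
    have : (((Finset.Icc 1 x).filter (fun n => n % M = w % M ∧ p^2 ∣ n)).card : ℝ)
        ≤ ((x / (M * p^2) : ℕ) : ℝ) + 1 := by exact_mod_cast hcount
    have hMR : (0:ℝ) < M := by exact_mod_cast hM0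
    have hpR : (0:ℝ) < p := by exact_mod_cast hpp.pos
    calc (((Finset.Icc 1 x).filter (fun n => n % M = w % M ∧ p^2 ∣ n)).card : ℝ)
        ≤ ((x / (M * p^2) : ℕ) : ℝ) + 1 := this
    _ ≤ (x:ℝ)/((M:ℝ) * (p:ℝ)^2) + 1 := by linarith
    _ = (x:ℝ)/M * (1/(p:ℝ)^2) + 1 := by field_simp
  have hsum34 : ∑ p ∈ PQ', (1:ℝ)/(p:ℝ)^2 ≤ 3/4 := by
    have hsub : PQ' ⊆ insert 2 (Finset.Ioc 2 Q) := by
      intro p hp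
      obtain ⟨hpPP, -⟩ := Finset.mem_filter.mp hp
      obtain ⟨hpQ, hpp⟩ := mem_PP.mp hpPP
      have h2 := hpp.two_le
      rcases Nat.eq_or_lt_of_le h2 with heq | hlt
      · exact Finset.mem_insert.mpr (Or.inl heq.symm)
      · exact Finset.mem_insert.mpr (Or.inr (Finset.mem_Ioc.mpr ⟨hlt, hpQ⟩))
    calc ∑ p ∈ PQ', (1:ℝ)/(p:ℝ)^2
        ≤ ∑ d ∈ insert 2 (Finset.Ioc 2 Q), (1:ℝ)/(d:ℝ)^2 :=
          Finset.sum_le_sum_of_subset_of_nonneg hsub (fun d _ _ => by positivity)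
    _ = 1/(2:ℝ)^2 + ∑ d ∈ Finset.Ioc 2 Q, (1:ℝ)/(d:ℝ)^2 := by
          rw [Finset.sum_insert (by simp)]
          norm_num
    _ ≤ 1/4 + 1/2 := by
          have := sum_inv_sq_Ioc_le 2 (by norm_num) Q
          norm_num at this ⊢
          linarith
    _ = 3/4 := by norm_num
  have hcardPQ' : (PQ'.card : ℝ) ≤ (Q:ℝ) + 1 := by
    have : PQ'.card ≤ Q + 1 := by
      calc PQ'.card ≤ (PP Q).card := Finset.card_le_card (Finset.filter_subset _ _)
      _ ≤ (Finset.range (Q+1)).card := Finset.card_le_card (Finset.filter_subset _ _)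
      _ = Q + 1 := Finset.card_range _
    exact_mod_cast this
  have hcards : (A.card : ℝ) ≤ (Good.card : ℝ) + ∑ p ∈ PQ',
      (((Finset.Icc 1 x).filter (fun n => n % M = w % M ∧ p^2 ∣ n)).card : ℝ) := by
    have h1 := Finset.card_le_card hcover
    have h2 := Finset.card_union_le Good (PQ'.biUnion
      (fun p => (Finset.Icc 1 x).filter (fun n => n % M = w % M ∧ p^2 ∣ n)))
    have h3 := Finset.card_biUnion_le (s := PQ')
      (t := fun p => (Finset.Icc 1 x).filter (fun n => n % M = w % M ∧ p^2 ∣ n))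
    have : A.card ≤ Good.card + ∑ p ∈ PQ',
        ((Finset.Icc 1 x).filter (fun n => n % M = w % M ∧ p^2 ∣ n)).card := by omega
    exact_mod_cast this
  have hsumle : ∑ p ∈ PQ',
      (((Finset.Icc 1 x).filter (fun n => n % M = w % M ∧ p^2 ∣ n)).card : ℝ)
        ≤ (x:ℝ)/M * (3/4) + ((Q:ℝ) + 1) := by
    calc ∑ p ∈ PQ',
        (((Finset.Icc 1 x).filter (fun n => n % M = w % M ∧ p^2 ∣ n)).card : ℝ)
        ≤ ∑ p ∈ PQ', ((x:ℝ)/M * (1/(p:ℝ)^2) + 1) := Finset.sum_le_sum hApcard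
    _ = (x:ℝ)/M * (∑ p ∈ PQ', (1:ℝ)/(p:ℝ)^2) + PQ'.card := by
        rw [Finset.sum_add_distrib, Finset.mul_sum]
        simp
    _ ≤ (x:ℝ)/M * (3/4) + ((Q:ℝ) + 1) := by
        have hxM : (0:ℝ) ≤ (x:ℝ)/M := by positivity
        have := mul_le_mul_of_nonneg_left hsum34 hxM
        linarith
  have hGoodcard : (x:ℝ)/M * (1/4) - ((Q:ℝ) + 2) ≤ (Good.card : ℝ) := by
    have hGA : (x:ℝ)/M - 1 ≤ (Good.card : ℝ) + ((x:ℝ)/M * (3/4) + ((Q:ℝ) + 1)) := by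
      linarith
    linarith
  have hfinal : (Good.card : ℝ) ≤
      (((Finset.Icc 1 x).filter (fun n => G Q n = N)).card : ℝ) := by
    exact_mod_cast Finset.card_le_card hGood
  have hrw : (x:ℝ)/(4*(M:ℝ)) = (x:ℝ)/(M:ℝ) * (1/4) := by
    rw [mul_comm (4:ℝ) (M:ℝ), ← div_div]
    ring
  calc (x:ℝ)/(4*(M:ℝ)) - ((Q:ℝ)+2) = (x:ℝ)/M * (1/4) - ((Q:ℝ)+2) := by rw [hrw]
  _ ≤ (Good.card:ℝ) := hGoodcard
  _ ≤ _ := hfinal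


/-- For `N = 0` and for every fixed `N ≥ 2`, the set `{n : B(n) - β(n) = N}`
has positive natural density. -/
theorem density_B_sub_beta_eq (N : ℕ) (hN : N = 0 ∨ 2 ≤ N) :
    ∃ d : ℝ, 0 < d ∧
      Tendsto
        (fun x : ℕ =>
          (((Finset.Icc 1 x).filter (fun n => B n - beta n = N)).card : ℝ) / (x : ℝ))
        atTop (nhds d) := by
  obtain ⟨w, hw, hFw⟩ := exists_witness N hN
  set M := w * ∏ p ∈ w.primeFactors, p with hMdef
  have hprodpos : 0 < ∏ p ∈ w.primeFactors, p :=
    Finset.prod_pos (fun p hp => (Nat.prime_of_mem_primeFactors hp).pos)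
  have hM0 : 0 < M := Nat.mul_pos (Nat.pos_of_ne_zero hw) hprodpos
  have hMR : (0:ℝ) < M := by exact_mod_cast hM0
  have hwM : w ≤ M := Nat.le_mul_of_pos_right w hprodpos
  set dQ : ℕ → ℝ := fun Q =>
    (((Finset.Icc 1 (per N Q)).filter (fun n => G Q n = N)).card : ℝ) / (per N Q) with hdQdef
  have hconv : ∀ Q : ℕ, Tendsto (fun x : ℕ =>
      (((Finset.Icc 1 x).filter (fun n => G Q n = N)).card : ℝ) / x) atTop (nhds (dQ Q)) :=
    fun Q => periodic_tendsto (per_pos N Q) (G_periodic N Q)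
  -- notation for the two counting functions
  set cS : ℕ → ℝ := fun x =>
    (((Finset.Icc 1 x).filter (fun n => B n - beta n = N)).card : ℝ) with hcSdef
  set cE : ℕ → ℕ → ℝ := fun Q x =>
    (((Finset.Icc 1 x).filter (fun n => G Q n = N)).card : ℝ) with hcEdef
  have hsym : ∀ Q x : ℕ, 1 ≤ Q → 1 ≤ x → |cS x / x - cE Q x / x| ≤ 1/(Q:ℝ) := by
    intro Q x hQ hx
    have hx0 : (0:ℝ) < x := by exact_mod_cast hx
    have hQ0 : (0:ℝ) < Q := by exact_mod_cast hQ
    have h := symdiff_bound N Q x hQ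
    rw [div_sub_div_same, abs_div, abs_of_pos hx0, div_le_div_iff₀ hx0 hQ0]
    have h2 : |cS x - cE Q x| * Q ≤ (x:ℝ) := by
      have := mul_le_mul_of_nonneg_right h hQ0.le
      rwa [div_mul_cancel₀ _ hQ0.ne'] at this
    linarith
  have hpair : ∀ Q Q' : ℕ, 1 ≤ Q → 1 ≤ Q' → |dQ Q - dQ Q'| ≤ 1/(Q:ℝ) + 1/(Q':ℝ) := by
    intro Q Q' hQ hQ'
    have htend : Tendsto (fun x : ℕ => |cE Q x / x - cE Q' x / x|) atTop
        (nhds (|dQ Q - dQ Q'|)) := ((hconv Q).sub (hconv Q')).abs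
    apply le_of_tendsto htend
    filter_upwards [eventually_ge_atTop 1] with x hx
    have h1 := hsym Q x hQ hx
    have h2 := hsym Q' x hQ' hx
    have := abs_sub_le (cE Q x / x) (cS x / x) (cE Q' x / x)
    rw [abs_sub_comm (cE Q x / x) (cS x / x)] at this
    linarith
  set seq : ℕ → ℝ := fun k => dQ (k + 1) with hseqdef
  have hcauchy : CauchySeq seq := by
    refine cauchySeq_of_le_tendsto_0 (fun k => 2/((k:ℝ)+1)) ?_ ?_
    · intro n m k hn hm
      have h1 : (1:ℝ)/((n:ℝ)+1) ≤ 1/((k:ℝ)+1) := by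
        apply one_div_le_one_div_of_le (by positivity)
        have : (k:ℝ) ≤ n := by exact_mod_cast hn
        linarith
      have h2 : (1:ℝ)/((m:ℝ)+1) ≤ 1/((k:ℝ)+1) := by
        apply one_div_le_one_div_of_le (by positivity)
        have : (k:ℝ) ≤ m := by exact_mod_cast hm
        linarith
      have := hpair (n+1) (m+1) (by omega) (by omega)
      rw [Real.dist_eq]
      push_cast at this
      calc |seq n - seq m| ≤ 1/((n:ℝ)+1) + 1/((m:ℝ)+1) := this
      _ ≤ 1/((k:ℝ)+1) + 1/((k:ℝ)+1) := by linarith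
      _ = 2/((k:ℝ)+1) := by ring
    · have h := tendsto_one_div_add_atTop_nhds_zero_nat.const_mul (2:ℝ)
      simp only [mul_zero] at h
      convert h using 2 with k
      ring
  obtain ⟨d, hd⟩ := cauchySeq_tendsto_of_complete hcauchy
  have hQd : ∀ Q : ℕ, 1 ≤ Q → |dQ Q - d| ≤ 1/(Q:ℝ) := by
    intro Q hQ
    have hf : Tendsto (fun k : ℕ => dist (dQ Q) (seq k)) atTop (nhds (dist (dQ Q) d)) :=
      tendsto_const_nhds.dist hd
    have hg : Tendsto (fun k : ℕ => 1/(Q:ℝ) + 1/((k:ℝ)+1)) atTop (nhds (1/(Q:ℝ) + 0)) :=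
      tendsto_const_nhds.add tendsto_one_div_add_atTop_nhds_zero_nat
    have hle : ∀ k : ℕ, dist (dQ Q) (seq k) ≤ 1/(Q:ℝ) + 1/((k:ℝ)+1) := by
      intro k
      rw [Real.dist_eq]
      have := hpair Q (k+1) hQ (by omega)
      push_cast at this
      exact this
    have := le_of_tendsto_of_tendsto' hf hg hle
    rw [add_zero] at this
    rw [← Real.dist_eq]
    exact this
  have hdQlow : ∀ Q : ℕ, w ≤ Q → 1 ≤ Q → 1/(4*(M:ℝ)) ≤ dQ Q := by
    intro Q hQw hQ1
    have hf : Tendsto (fun x : ℕ => 1/(4*(M:ℝ)) - ((Q:ℝ)+2)/x) atTop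
        (nhds (1/(4*(M:ℝ)) - 0)) :=
      tendsto_const_nhds.sub (tendsto_const_div_atTop_nhds_zero_nat ((Q:ℝ)+2))
    rw [sub_zero] at hf
    apply le_of_tendsto_of_tendsto hf (hconv Q)
    filter_upwards [eventually_ge_atTop (max w 1)] with x hx
    have hxw : w ≤ x := le_trans (le_max_left _ _) hx
    have hx1 : 1 ≤ x := le_trans (le_max_right _ _) hx
    have hx0 : (0:ℝ) < x := by exact_mod_cast hx1
    have h := EQ_lower N w hw hFw Q hQw x hxw
    rw [← hMdef] at h
    have hdiv : (1/(4*(M:ℝ)) - ((Q:ℝ)+2)/x) * x ≤ cE Q x := by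
      have hxx : ((x:ℝ)/(4*(M:ℝ)) - ((Q:ℝ)+2)) ≤ cE Q x := h
      calc (1/(4*(M:ℝ)) - ((Q:ℝ)+2)/x) * x
          = (x:ℝ)/(4*(M:ℝ)) - ((Q:ℝ)+2) := by field_simp
      _ ≤ cE Q x := hxx
    rw [← le_div_iff₀ hx0] at hdiv
    exact hdiv
  refine ⟨d, ?_, ?_⟩
  · -- positivity
    set Q0 : ℕ := 8*M + w with hQ0def
    have hQ0w : w ≤ Q0 := by omega
    have hQ01 : 1 ≤ Q0 := by omega
    have h1 := hdQlow Q0 hQ0w hQ01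
    have h2 := hQd Q0 hQ01
    have hQ0R : (8:ℝ)*M ≤ (Q0:ℝ) := by
      have : (8*M : ℕ) ≤ Q0 := by omega
      exact_mod_cast this
    have h3 : 1/(Q0:ℝ) ≤ 1/(8*(M:ℝ)) := by
      apply one_div_le_one_div_of_le (by positivity)
      linarith
    have habs := abs_le.mp h2
    have : 1/(8*(M:ℝ)) ≤ d := by
      have : dQ Q0 - 1/(Q0:ℝ) ≤ d := by linarith [habs.1]
      have h4 : 1/(4*(M:ℝ)) - 1/(8*(M:ℝ)) = 1/(8*(M:ℝ)) := by
        field_simp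
        ring
      linarith
    have : (0:ℝ) < 1/(8*(M:ℝ)) := by positivity
    linarith
  · -- convergence
    rw [Metric.tendsto_atTop]
    intro ε hε
    obtain ⟨Q1, hQ1gt⟩ := exists_nat_gt (4/ε)
    have hQ1pos : 0 < Q1 := by
      by_contra h
      push_neg at h
      interval_cases Q1
      simp at hQ1gt
      have : (0:ℝ) < 4/ε := by positivity
      linarith
    have hQ1R : (0:ℝ) < Q1 := by exact_mod_cast hQ1pos
    have h1Q : 1/(Q1:ℝ) < ε/4 := by
      rw [div_lt_div_iff₀ hQ1R (by norm_num : (0:ℝ) < 4)]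
      rw [div_lt_iff₀ hε] at hQ1gt
      linarith
    obtain ⟨X1, hX1⟩ := (Metric.tendsto_atTop.mp (hconv Q1)) (ε/4) (by positivity)
    refine ⟨max X1 1, fun x hx => ?_⟩
    have hxX : X1 ≤ x := le_trans (le_max_left _ _) hx
    have hx1 : 1 ≤ x := le_trans (le_max_right _ _) hx
    have ha := hsym Q1 x hQ1pos hx1
    have hb := hX1 x hxX
    have hc := hQd Q1 hQ1pos
    rw [Real.dist_eq] at hb ⊢
    have habs1 := abs_sub_le (cS x / x) (cE Q1 x / x) (dQ Q1)
    have habs2 := abs_sub_le (cS x / x) (dQ Q1) d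
    calc |cS x / x - d| ≤ |cS x / x - dQ Q1| + |dQ Q1 - d| := habs2
    _ ≤ (|cS x / x - cE Q1 x / x| + |cE Q1 x / x - dQ Q1|) + |dQ Q1 - d| := by linarith
    _ < ε/4 + ε/4 + ε/4 := by
        have : |cS x / x - cE Q1 x / x| ≤ 1/(Q1:ℝ) := ha
        have : |dQ Q1 - d| ≤ 1/(Q1:ℝ) := hc
        linarith
    _ < ε := by linarith
end

section
/- The sequence of iterates B_1^k(n) is eventually periodic for every integer n ≥ 2, and the only cycles of B_1 are the fixed point (4) and the 2-cycle (5,6): for every n ≥ 2 there exists k ≥ 0 such that B_1^k(n) ∈ {4, 5, 6}, and moreover B_1(4) = 4, B_1(5) = 6, B_1(6) = 5. -/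
/-- `Ba a n = n + a` if `n` is prime, and `B n` otherwise. -/
def Ba (a n : ℕ) : ℕ := if n.Prime then n + a else B n

lemma B_mul {a b : ℕ} (ha : a ≠ 0) (hb : b ≠ 0) : B (a * b) = B a + B b := by
  unfold B
  rw [(Nat.perm_primeFactorsList_mul ha hb).sum_eq, List.sum_append]

lemma B_prime {p : ℕ} (hp : p.Prime) : B p = p := by
  simp [B, Nat.primeFactorsList_prime hp]

/-- decomposition of a composite number -/
lemma composite_decomp {n : ℕ} (hn : 2 ≤ n) (hnp : ¬ n.Prime) :
    ∃ p m, p.Prime ∧ 2 ≤ m ∧ n = p * m := by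
  have hpos : n ≠ 1 := by omega
  have hp := Nat.minFac_prime hpos
  have hd : n.minFac ∣ n := Nat.minFac_dvd n
  refine ⟨n.minFac, n / n.minFac, hp, ?_, (Nat.mul_div_cancel' hd).symm⟩
  have hpos : 0 < n / n.minFac := Nat.div_pos (Nat.minFac_le (by omega)) hp.pos
  rcases Nat.lt_or_ge (n / n.minFac) 2 with hlt | hge
  · exfalso
    have h1 : n / n.minFac = 1 := by omega
    have : n = n.minFac := by
      have h2 := Nat.mul_div_cancel' hd
      rw [h1, mul_one] at h2
      omega
    exact hnp (this ▸ hp)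
  · exact hge

lemma B_le (n : ℕ) : B n ≤ n := by
  induction n using Nat.strong_induction_on with
  | _ n ih =>
    rcases lt_or_ge n 2 with h | h
    · interval_cases n <;> simp [B]
    by_cases hp : n.Prime
    · rw [B_prime hp]
    obtain ⟨p, m, hpp, hm, rfl⟩ := composite_decomp h hp
    have h2p := hpp.two_le
    rw [B_mul (by omega) (by omega), B_prime hpp]
    have hml : m < p * m := by nlinarith
    have := ih m hml
    nlinarith

lemma B_ge_two {n : ℕ} (h : 2 ≤ n) : 2 ≤ B n := by
  by_cases hp : n.Prime
  · rw [B_prime hp]; exact h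
  obtain ⟨p, m, hpp, hm, rfl⟩ := composite_decomp h hp
  have h2p := hpp.two_le
  rw [B_mul (by omega) (by omega), B_prime hpp]
  omega

lemma B_lt {n : ℕ} (h : 2 ≤ n) (hp : ¬ n.Prime) (h4 : n ≠ 4) : B n < n := by
  obtain ⟨p, m, hpp, hm, rfl⟩ := composite_decomp h hp
  have h2p := hpp.two_le
  rw [B_mul (by omega) (by omega), B_prime hpp]
  have hBm := B_le m
  have : p ≥ 3 ∨ m ≥ 3 := by
    by_contra hc
    push_neg at hc
    have hp2 : p = 2 := by omega
    have hm2 : m = 2 := by omega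
    subst hp2; subst hm2
    exact h4 rfl
  rcases this with h3 | h3 <;> nlinarith

lemma Ba_eval (n : ℕ) (hp : ¬ n.Prime) : Ba 1 n = B n := by simp [Ba, hp]

lemma B_four : B 4 = 4 := by
  have : (4 : ℕ) = 2 * 2 := rfl
  rw [this, B_mul two_ne_zero two_ne_zero, B_prime Nat.prime_two]

lemma B_six : B 6 = 5 := by
  have : (6 : ℕ) = 2 * 3 := rfl
  rw [this, B_mul two_ne_zero three_ne_zero, B_prime Nat.prime_two, B_prime Nat.prime_three]

/-- `B₁` is eventually periodic on every `n ≥ 2`, with the only cycles being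
the fixed point `(4)` and the 2-cycle `(5, 6)`. -/
theorem B1_eventually_periodic :
    (∀ n : ℕ, 2 ≤ n → ∃ k : ℕ, (Ba 1)^[k] n ∈ ({4, 5, 6} : Set ℕ)) ∧
      Ba 1 4 = 4 ∧ Ba 1 5 = 6 ∧ Ba 1 6 = 5 := by
  refine ⟨?_, ?_, ?_, ?_⟩
  · intro n
    induction n using Nat.strong_induction_on with
    | _ n ih =>
      intro hn
      by_cases h456 : n = 4 ∨ n = 5 ∨ n = 6
      · exact ⟨0, by rcases h456 with h | h | h <;> subst h <;> simp⟩
      by_cases h2 : n = 2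
      · subst h2
        refine ⟨2, ?_⟩
        have e1 : Ba 1 2 = 3 := by simp [Ba, Nat.prime_two]
        have e2 : Ba 1 3 = 4 := by simp [Ba, Nat.prime_three]
        simp [Function.iterate_succ_apply, e1, e2]
      by_cases h3 : n = 3
      · subst h3
        refine ⟨1, ?_⟩
        have e2 : Ba 1 3 = 4 := by simp [Ba, Nat.prime_three]
        simp [e2]
      have h7 : 7 ≤ n := by
        push_neg at h456
        omega
      by_cases hp : n.Prime
      · -- n prime ≥ 7, so n odd, n+1 even composite
        have hodd : n % 2 = 1 := by
          rcases hp.eq_two_or_odd with h | h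
          · omega
          · exact h
        have hdvd : 2 ∣ n + 1 := by omega
        have hnp1 : ¬ (n + 1).Prime := by
          intro hq
          have := (Nat.Prime.even_iff hq).mp (even_iff_two_dvd.mpr hdvd)
          omega
        have e1 : Ba 1 n = n + 1 := by simp [Ba, hp]
        have e2 : Ba 1 (n + 1) = B (n + 1) := Ba_eval _ hnp1
        have hsplit : n + 1 = 2 * ((n + 1) / 2) := (Nat.mul_div_cancel' hdvd).symm
        have hhalf : 2 ≤ (n + 1) / 2 := by omega
        have hBle : B ((n + 1) / 2) ≤ (n + 1) / 2 := B_le _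
        have hBval : B (n + 1) = 2 + B ((n + 1) / 2) := by
          conv_lhs => rw [hsplit]
          rw [B_mul two_ne_zero (by omega), B_prime Nat.prime_two]
        have hlt : B (n + 1) < n := by omega
        have hge : 2 ≤ B (n + 1) := B_ge_two (by omega)
        obtain ⟨k, hk⟩ := ih (B (n + 1)) hlt hge
        refine ⟨k + 2, ?_⟩
        rw [Function.iterate_succ_apply, Function.iterate_succ_apply, e1, e2]
        exact hk
      · have hlt : B n < n := B_lt hn hp (by tauto)
        have hge : 2 ≤ B n := B_ge_two hn
        obtain ⟨k, hk⟩ := ih (B n) hlt hge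
        refine ⟨k + 1, ?_⟩
        rw [Function.iterate_succ_apply, Ba_eval n hp]
        exact hk
  · rw [Ba_eval 4 (by norm_num), B_four]
  · simp [Ba, Nat.prime_five]
  · rw [Ba_eval 6 (by norm_num), B_six]
end
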